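/- There exists a Las Vegas one-way probabilistic one-counter automaton (Las Vegas 1P1CA) over the alphabet {a,b,c,d} that solves the promise problem ONE-NONE with success probability 1/3: every yes-instance (a string in ONE·NONE) is accepted with probability at least 1/3 and rejected with probability 0, and every no-instance (a string in NONE·ONE) is rejected with probability at least 1/3 and accepted with probability 0. -/

import Mathlib

/-- Input symbols extended with the left (`cent`) and right (`dollar`) end-markers. -/
inductive TSym (α : Type) : Type
  | cent : TSym α
  | letter : α → TSym α
  | dollar : TSym α

/-- The tape content `¢ w $` for an input word `w`. -/
def tagged {α : Type} (w : List α) : List (TSym α) :=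
  TSym.cent :: (w.map TSym.letter ++ [TSym.dollar])

/-- The three kinds of states of a Las Vegas automaton. -/
inductive LVDec : Type
  | acc : LVDec
  | rej : LVDec
  | unk : LVDec
deriving DecidableEq

/-- A Las Vegas one-way probabilistic one-counter automaton: the states are
partitioned into accepting, rejecting and neutral states via `lvdec`. -/
structure LasVegas1P1CA (α : Type) where
  Q : Type
  [fintypeQ : Fintype Q]
  [decQ : DecidableEq Q]
  q0 : Q
  lvdec : Q → LVDec
  m : ℕ
  δ : Q → TSym α → Bool → Q → ℤ → ℝ
  nonneg : ∀ q σ z q' c, 0 ≤ δ q σ z q' c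
  support : ∀ q σ z q' c, δ q σ z q' c ≠ 0 → |c| ≤ (m : ℤ)
  total : ∀ q σ z, (∑ q' : Q, ∑ c ∈ Finset.Icc (-(m : ℤ)) (m : ℤ), δ q σ z q' c) = 1

attribute [instance] LasVegas1P1CA.fintypeQ LasVegas1P1CA.decQ

namespace LasVegas1P1CA

variable {α : Type} (M : LasVegas1P1CA α)

/-- One step of the evolution of the probability distribution over configurations. -/
noncomputable def stepD (μ : M.Q × ℤ → ℝ) (σ : TSym α) : M.Q × ℤ → ℝ :=
  fun p' => ∑ q : M.Q, ∑ c ∈ Finset.Icc (-(M.m : ℤ)) (M.m : ℤ),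
    μ (q, p'.2 - c) * M.δ q σ (decide (p'.2 - c = 0)) p'.1 c

/-- Initial distribution: point mass on `(q0, 0)`. -/
def initD : M.Q × ℤ → ℝ := fun p => if p = (M.q0, 0) then 1 else 0

/-- Distribution over configurations after reading `¢ w $`. -/
noncomputable def finalD (w : List α) : M.Q × ℤ → ℝ := (tagged w).foldl M.stepD M.initD

/-- Total probability of computation paths ending in an accepting state. -/
noncomputable def accProb (w : List α) : ℝ :=
  ∑' p : M.Q × ℤ, if M.lvdec p.1 = LVDec.acc then M.finalD w p else 0

/-- Total probability of computation paths ending in a rejecting state. -/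
noncomputable def rejProb (w : List α) : ℝ :=
  ∑' p : M.Q × ℤ, if M.lvdec p.1 = LVDec.rej then M.finalD w p else 0

end LasVegas1P1CA

/-- The alphabet `{a, b, c, d}`. -/
inductive ΓN : Type
  | a : ΓN
  | b : ΓN
  | c : ΓN
  | d : ΓN
deriving DecidableEq

/-- Exactly one of three propositions holds. -/
def exactlyOne (P Q R : Prop) : Prop :=
  (P ∧ ¬Q ∧ ¬R) ∨ (¬P ∧ Q ∧ ¬R) ∨ (¬P ∧ ¬Q ∧ R)

/-- `#_a(u) = #_b(u)`. -/
def eqAB (u : List ΓN) : Prop := u.count ΓN.a = u.count ΓN.b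
/-- `#_b(u) = #_c(u)`. -/
def eqBC (u : List ΓN) : Prop := u.count ΓN.b = u.count ΓN.c
/-- `#_c(u) = #_a(u)`. -/
def eqCA (u : List ΓN) : Prop := u.count ΓN.c = u.count ΓN.a

/-- The language `ONE`: strings `u ++ y` with `u ∈ {a,b,c}*`, `y ∈ {d}*`,
`|y| ≥ |u|`, and exactly one of the three count equalities holding for `u`. -/
def ONE : Language ΓN :=
  {w | ∃ u y : List ΓN, w = u ++ y ∧ (∀ x ∈ u, x ≠ ΓN.d) ∧ (∀ x ∈ y, x = ΓN.d) ∧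
    u.length ≤ y.length ∧ exactlyOne (eqAB u) (eqBC u) (eqCA u)}

/-- The language `NONE`: as `ONE`, but none of the three count equalities holds. -/
def NONE : Language ΓN :=
  {w | ∃ u y : List ΓN, w = u ++ y ∧ (∀ x ∈ u, x ≠ ΓN.d) ∧ (∀ x ∈ y, x = ΓN.d) ∧
    u.length ≤ y.length ∧ ¬ eqAB u ∧ ¬ eqBC u ∧ ¬ eqCA u}

namespace Stmt4

instance : Fintype LVDec :=
  ⟨⟨{LVDec.acc, LVDec.rej, LVDec.unk}, by decide⟩, by intro x; cases x <;> decide⟩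

inductive Pr : Type | ab | bc | ca
deriving DecidableEq

instance : Fintype Pr :=
  ⟨⟨{Pr.ab, Pr.bc, Pr.ca}, by decide⟩, by intro x; cases x <;> decide⟩

inductive St : Type
  | ph1 (s : Bool)
  | ph2 (e1 s : Bool)
  | ph3 (e1 s : Bool)
  | ph4 (e1 e2 : Bool)
  | fin (v : LVDec)
deriving DecidableEq, Fintype

abbrev Q : Type := Option (Pr × St)

def val : Pr → ΓN → ℤ
  | .ab, .a => 1 | .ab, .b => -1
  | .bc, .b => 1 | .bc, .c => -1
  | .ca, .c => 1 | .ca, .a => -1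
  | _, _ => 0

lemma val_bound (p : Pr) (x : ΓN) : |val p x| ≤ 1 := by cases p <;> cases x <;> decide

def decideLV (e1 e2 : Bool) : LVDec :=
  if e1 && !e2 then .acc else if !e1 && e2 then .rej else .unk

def detStep : Q → TSym ΓN → Bool → Q × ℤ
  | none, _, _ => (some (.ab, .fin .unk), 0)
  | some (p, st), .cent, _ => (some (p, st), 0)
  | some (p, .ph1 s), .letter x, z =>
      if x = ΓN.d then (some (p, .ph2 z s), if z then 0 else if s then -1 else 1)
      else (some (p, .ph1 (if z then decide (0 < val p x) else s)), val p x)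
  | some (p, .ph1 _), .dollar, _ => (some (p, .fin .unk), 0)
  | some (p, .ph2 e1 s), .letter x, z =>
      if x = ΓN.d then (some (p, .ph2 e1 s), if z then 0 else if s then -1 else 1)
      else (some (p, .ph3 e1 (if z then decide (0 < val p x) else s)), val p x)
  | some (p, .ph2 _ _), .dollar, _ => (some (p, .fin .unk), 0)
  | some (p, .ph3 e1 s), .letter x, z =>
      if x = ΓN.d then (some (p, .ph4 e1 z), 0)
      else (some (p, .ph3 e1 (if z then decide (0 < val p x) else s)), val p x)
  | some (p, .ph3 e1 _), .dollar, z => (some (p, .fin (decideLV e1 z)), 0)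
  | some (p, .ph4 e1 e2), .letter _, _ => (some (p, .ph4 e1 e2), 0)
  | some (p, .ph4 e1 e2), .dollar, _ => (some (p, .fin (decideLV e1 e2)), 0)
  | some (p, .fin v), .letter _, _ => (some (p, .fin v), 0)
  | some (p, .fin v), .dollar, _ => (some (p, .fin v), 0)

lemma detStep_bound (q : Q) (σ : TSym ΓN) (z : Bool) : |(detStep q σ z).2| ≤ 1 := by
  rcases q with _ | ⟨p, st⟩
  · simp [detStep]
  · rcases σ with _ | x | _ <;> rcases st with s | ⟨e1, s⟩ | ⟨e1, s⟩ | ⟨e1, e2⟩ | v <;>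
      simp only [detStep] <;> (try split_ifs) <;>
      first
        | decide
        | (cases s <;> decide)
        | simpa using val_bound p x

lemma detStep_some (q : Q) (σ : TSym ΓN) (z : Bool) : (detStep q σ z).1 ≠ none := by
  rcases q with _ | ⟨p, st⟩
  · simp [detStep]
  · rcases σ with _ | x | _ <;> rcases st with s | ⟨e1, s⟩ | ⟨e1, s⟩ | ⟨e1, e2⟩ | v <;>
      simp only [detStep] <;> (try split_ifs) <;> simp

def isCent : TSym ΓN → Bool
  | .cent => true
  | _ => false

def startSet : Finset Q :=
  {some (.ab, .ph1 true), some (.bc, .ph1 true), some (.ca, .ph1 true)}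

noncomputable def mδ (q : Q) (σ : TSym ΓN) (z : Bool) (q' : Q) (c : ℤ) : ℝ :=
  if q = none ∧ isCent σ = true then (if q' ∈ startSet ∧ c = 0 then 1/3 else 0)
  else if (q', c) = detStep q σ z then 1 else 0

def mlvdec : Q → LVDec
  | some (_, .fin v) => v
  | _ => .unk

lemma sum_pair_ind (a : Q) (b : ℤ) (hb : b ∈ Finset.Icc (-1 : ℤ) 1) :
    (∑ q' : Q, ∑ c ∈ Finset.Icc (-1 : ℤ) 1, (if (q', c) = (a, b) then (1 : ℝ) else 0)) = 1 := by
  have h1 : ∀ q' : Q, (∑ c ∈ Finset.Icc (-1 : ℤ) 1, (if (q', c) = (a, b) then (1 : ℝ) else 0))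
      = if q' = a then 1 else 0 := by
    intro q'
    by_cases hq : q' = a
    · subst hq
      simp only [Prod.mk.injEq, true_and, if_pos rfl]
      rw [Finset.sum_ite_eq' (Finset.Icc (-1 : ℤ) 1) b (fun _ => (1 : ℝ))]
      simp [hb]
    · simp [Prod.mk.injEq, hq]
  rw [Finset.sum_congr rfl fun q' _ => h1 q']
  rw [Finset.sum_ite_eq' Finset.univ a (fun _ => (1 : ℝ))]
  simp

@[reducible] noncomputable def M : LasVegas1P1CA ΓN where
  Q := Q
  q0 := none
  lvdec := mlvdec
  m := 1
  δ := mδ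
  nonneg := by intro q σ z q' c; unfold mδ; split_ifs <;> norm_num
  support := by
    intro q σ z q' c h
    unfold mδ at h
    split_ifs at h with h1 h2 h3
    · rcases h2 with ⟨_, rfl⟩; norm_num
    · simp at h
    · rw [show c = (detStep q σ z).2 from congrArg Prod.snd h3]
      simpa using detStep_bound q σ z
    · simp at h
  total := by
    intro q σ z
    show (∑ q' : Q, ∑ c ∈ Finset.Icc (-(1 : ℕ) : ℤ) ((1 : ℕ) : ℤ), mδ q σ z q' c) = 1
    have hicc : (Finset.Icc (-(1 : ℕ) : ℤ) ((1 : ℕ) : ℤ)) = Finset.Icc (-1 : ℤ) 1 := by norm_num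
    rw [hicc]
    unfold mδ
    by_cases h : q = none ∧ isCent σ = true
    · simp only [if_pos h]
      have h1 : ∀ q' : Q, (∑ c ∈ Finset.Icc (-1 : ℤ) 1, (if q' ∈ startSet ∧ c = 0 then (1/3 : ℝ) else 0))
          = if q' ∈ startSet then 1/3 else 0 := by
        intro q'
        by_cases hq : q' ∈ startSet
        · simp only [hq, true_and, if_pos]
          rw [Finset.sum_ite_eq' (Finset.Icc (-1 : ℤ) 1) 0 (fun _ => (1/3 : ℝ))]
          norm_num
        · simp [hq]
      rw [Finset.sum_congr rfl fun q' _ => h1 q']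
      rw [Finset.sum_ite_mem]
      simp only [Finset.univ_inter]
      rw [Finset.sum_const]
      rw [show startSet.card = 3 from by decide]
      norm_num
    · simp only [if_neg h]
      exact sum_pair_ind (detStep q σ z).1 (detStep q σ z).2
        (by simpa [Finset.mem_Icc, abs_le] using (abs_le.mp (detStep_bound q σ z)))

/-! ### Dynamics: point masses and deterministic runs -/

def pm (x : Q × ℤ) : Q × ℤ → ℝ := fun p => if p = x then 1 else 0

def runStep (y : Q × ℤ) (σ : TSym ΓN) : Q × ℤ :=
  ((detStep y.1 σ (decide (y.2 = 0))).1, y.2 + (detStep y.1 σ (decide (y.2 = 0))).2)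

def run (x : Q × ℤ) (l : List (TSym ΓN)) : Q × ℤ := l.foldl runStep x

@[simp] lemma run_nil (x : Q × ℤ) : run x [] = x := rfl
@[simp] lemma run_cons (x : Q × ℤ) (σ : TSym ΓN) (l : List (TSym ΓN)) :
    run x (σ :: l) = run (runStep x σ) l := rfl
lemma run_append (x : Q × ℤ) (l1 l2 : List (TSym ΓN)) :
    run x (l1 ++ l2) = run (run x l1) l2 := List.foldl_append ..

lemma step_core (q0 : Q) (n : ℤ) (σ : TSym ΓN) :
    M.stepD (pm (q0, n)) σ = fun p' =>
      if p'.2 - n ∈ Finset.Icc (-1 : ℤ) 1 then mδ q0 σ (decide (n = 0)) p'.1 (p'.2 - n) else 0 := by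
  funext p'
  show (∑ q : Q, ∑ c ∈ Finset.Icc (-((1:ℕ) : ℤ)) ((1:ℕ) : ℤ),
      pm (q0, n) (q, p'.2 - c) * mδ q σ (decide (p'.2 - c = 0)) p'.1 c) = _
  have hicc : (Finset.Icc (-((1:ℕ) : ℤ)) ((1:ℕ) : ℤ)) = Finset.Icc (-1 : ℤ) 1 := by norm_num
  rw [hicc]
  have key : ∀ (q : Q) (c : ℤ),
      pm (q0, n) (q, p'.2 - c) * mδ q σ (decide (p'.2 - c = 0)) p'.1 c
      = if q = q0 ∧ c = p'.2 - n then mδ q0 σ (decide (n = 0)) p'.1 (p'.2 - n) else 0 := by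
    intro q c
    by_cases hqc : q = q0 ∧ c = p'.2 - n
    · obtain ⟨rfl, rfl⟩ := hqc
      have h2 : p'.2 - (p'.2 - n) = n := by ring
      rw [if_pos ⟨rfl, rfl⟩, h2]
      simp [pm]
    · rw [if_neg hqc]
      have : pm (q0, n) (q, p'.2 - c) = 0 := by
        unfold pm
        rw [if_neg]
        intro hh
        rw [Prod.mk.injEq] at hh
        exact hqc ⟨hh.1, by omega⟩
      rw [this, zero_mul]
  rw [Finset.sum_congr rfl fun q _ => Finset.sum_congr rfl fun c _ => key q c]
  have inner : ∀ q : Q, (∑ c ∈ Finset.Icc (-1 : ℤ) 1,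
      if q = q0 ∧ c = p'.2 - n then mδ q0 σ (decide (n = 0)) p'.1 (p'.2 - n) else 0)
      = if q = q0 then (if p'.2 - n ∈ Finset.Icc (-1 : ℤ) 1 then
          mδ q0 σ (decide (n = 0)) p'.1 (p'.2 - n) else 0) else 0 := by
    intro q
    by_cases hq : q = q0
    · subst hq
      rw [if_pos rfl]
      have hcongr : ∀ c ∈ Finset.Icc (-1 : ℤ) 1,
          (if q = q ∧ c = p'.2 - n then mδ q σ (decide (n = 0)) p'.1 (p'.2 - n) else 0)
          = if c = p'.2 - n then mδ q σ (decide (n = 0)) p'.1 (p'.2 - n) else 0 := by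
        intro c _; simp
      rw [Finset.sum_congr rfl hcongr,
        Finset.sum_ite_eq' (Finset.Icc (-1 : ℤ) 1) (p'.2 - n)]
    · simp [hq]
  rw [Finset.sum_congr rfl fun q _ => inner q]
  rw [Finset.sum_ite_eq' Finset.univ q0]
  simp

lemma step_pm (x : Q × ℤ) (σ : TSym ΓN) (h : ¬(x.1 = none ∧ isCent σ = true)) :
    M.stepD (pm x) σ = pm (runStep x σ) := by
  obtain ⟨q0, n⟩ := x
  rw [step_core]
  funext p'
  have h' : ¬(q0 = none ∧ isCent σ = true) := h
  have hδ : ∀ (q' : Q) (c : ℤ), mδ q0 σ (decide (n = 0)) q' c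
      = if (q', c) = detStep q0 σ (decide (n = 0)) then 1 else 0 := by
    intro q' c; unfold mδ; rw [if_neg h']
  have hrs1 : (runStep (q0, n) σ).1 = (detStep q0 σ (decide (n = 0))).1 := rfl
  have hrs2 : (runStep (q0, n) σ).2 = n + (detStep q0 σ (decide (n = 0))).2 := rfl
  have hb := abs_le.mp (detStep_bound q0 σ (decide (n = 0)))
  by_cases hp : p' = runStep (q0, n) σ
  · have e1 : p'.1 = (detStep q0 σ (decide (n = 0))).1 := by rw [hp, hrs1]
    have e2 : p'.2 - n = (detStep q0 σ (decide (n = 0))).2 := by rw [hp, hrs2]; ring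
    rw [e1, e2, if_pos (by simp only [Finset.mem_Icc]; omega), hδ, if_pos rfl]; simp only [pm]; rw [if_pos hp]
  · simp only [pm]; rw [if_neg hp]
    split_ifs with hIcc
    · rw [hδ, if_neg]
      intro hh
      apply hp
      have f1 := congrArg Prod.fst hh
      have f2 := congrArg Prod.snd hh
      apply Prod.ext
      · rw [hrs1]; exact f1
      · rw [hrs2, ← f2]; ring
    · rfl

lemma step_init :
    M.stepD M.initD TSym.cent = fun p' =>
      (1/3 : ℝ) * (pm (some (.ab, .ph1 true), 0) p' + pm (some (.bc, .ph1 true), 0) p'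
        + pm (some (.ca, .ph1 true), 0) p') := by
  have h0 : M.initD = pm (none, 0) := rfl
  rw [h0, step_core]
  funext p'
  obtain ⟨q, n⟩ := p'
  have hδ : mδ none TSym.cent (decide ((0:ℤ) = 0)) q (n - 0)
      = if q ∈ startSet ∧ n - 0 = 0 then 1/3 else 0 := by
    unfold mδ; rw [if_pos ⟨rfl, rfl⟩]
  show (if n - 0 ∈ Finset.Icc (-1 : ℤ) 1
      then mδ none TSym.cent (decide ((0:ℤ) = 0)) q (n - 0) else 0) = _
  rw [hδ]
  have lhs_eq : (if n - 0 ∈ Finset.Icc (-1:ℤ) 1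
        then (if q ∈ startSet ∧ n - 0 = 0 then (1/3:ℝ) else 0) else 0)
      = if q ∈ startSet ∧ n = 0 then (1/3:ℝ) else 0 := by
    by_cases h1 : n - 0 ∈ Finset.Icc (-1:ℤ) 1
    · rw [if_pos h1]; simp
    · rw [if_neg h1, eq_comm, if_neg]
      rintro ⟨_, h2⟩
      exact h1 (by simp [h2])
  rw [lhs_eq]
  by_cases hq : q ∈ startSet
  · by_cases hn : n = 0
    · subst hn
      rw [if_pos ⟨hq, rfl⟩]
      fin_cases hq <;> simp +decide [pm] <;> norm_num
    · rw [if_neg (fun h => hn h.2)]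
      have hne : ∀ pr : Pr, ((q, n) : Q × ℤ) ≠ (some (pr, .ph1 true), 0) :=
        fun pr hh => hn (congrArg Prod.snd hh)
      simp [pm, hne .ab, hne .bc, hne .ca]
  · rw [if_neg (fun h => hq h.1)]
    have h1 : ((q, n) : Q × ℤ) ≠ (some (.ab, .ph1 true), 0) :=
      fun hh => hq (by rw [show q = some (Pr.ab, St.ph1 true) from congrArg Prod.fst hh]; decide)
    have h2 : ((q, n) : Q × ℤ) ≠ (some (.bc, .ph1 true), 0) :=
      fun hh => hq (by rw [show q = some (Pr.bc, St.ph1 true) from congrArg Prod.fst hh]; decide)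
    have h3 : ((q, n) : Q × ℤ) ≠ (some (.ca, .ph1 true), 0) :=
      fun hh => hq (by rw [show q = some (Pr.ca, St.ph1 true) from congrArg Prod.fst hh]; decide)
    simp [pm, h1, h2, h3]

lemma stepD_add (μ ν : Q × ℤ → ℝ) (σ : TSym ΓN) :
    M.stepD (fun p => μ p + ν p) σ = fun p' => M.stepD μ σ p' + M.stepD ν σ p' := by
  funext p'
  simp only [LasVegas1P1CA.stepD]
  rw [← Finset.sum_add_distrib]
  apply Finset.sum_congr rfl; intro q _
  rw [← Finset.sum_add_distrib]
  apply Finset.sum_congr rfl; intro c _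
  ring

lemma stepD_smul (a : ℝ) (μ : Q × ℤ → ℝ) (σ : TSym ΓN) :
    M.stepD (fun p => a * μ p) σ = fun p' => a * M.stepD μ σ p' := by
  funext p'
  simp only [LasVegas1P1CA.stepD]
  rw [Finset.mul_sum]
  apply Finset.sum_congr rfl; intro q _
  rw [Finset.mul_sum]
  apply Finset.sum_congr rfl; intro c _
  ring

lemma stepD_mix (μ1 μ2 μ3 : Q × ℤ → ℝ) (σ : TSym ΓN) :
    M.stepD (fun p => (1/3 : ℝ) * (μ1 p + μ2 p + μ3 p)) σ
    = fun p' => (1/3 : ℝ) * (M.stepD μ1 σ p' + M.stepD μ2 σ p' + M.stepD μ3 σ p') := by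
  funext p'
  have h1 : M.stepD (fun p => (1/3 : ℝ) * (μ1 p + μ2 p + μ3 p)) σ p'
      = (1/3 : ℝ) * M.stepD (fun p => μ1 p + μ2 p + μ3 p) σ p' :=
    congrFun (stepD_smul (1/3) (fun p => μ1 p + μ2 p + μ3 p) σ) p'
  have h2 : M.stepD (fun p => μ1 p + μ2 p + μ3 p) σ p'
      = M.stepD (fun p => μ1 p + μ2 p) σ p' + M.stepD μ3 σ p' :=
    congrFun (stepD_add (fun p => μ1 p + μ2 p) μ3 σ) p'
  have h3 : M.stepD (fun p => μ1 p + μ2 p) σ p'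
      = M.stepD μ1 σ p' + M.stepD μ2 σ p' :=
    congrFun (stepD_add μ1 μ2 σ) p'
  rw [h1, h2, h3]

lemma foldl_mix (l : List (TSym ΓN)) (hl : ∀ σ ∈ l, isCent σ = false) :
    ∀ x1 x2 x3 : Q × ℤ,
      List.foldl M.stepD (fun p => (1/3 : ℝ) * (pm x1 p + pm x2 p + pm x3 p)) l
      = fun p => (1/3 : ℝ) * (pm (run x1 l) p + pm (run x2 l) p + pm (run x3 l) p) := by
  induction l with
  | nil => intro x1 x2 x3; rfl
  | cons σ t ih =>
    intro x1 x2 x3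
    have hσ : isCent σ = false := hl σ (by simp)
    have hstep : ∀ x : Q × ℤ, M.stepD (pm x) σ = pm (runStep x σ) := by
      intro x
      exact step_pm x σ (by rw [hσ]; simp)
    rw [List.foldl_cons, stepD_mix]
    have : (fun p' => (1/3 : ℝ) * (M.stepD (pm x1) σ p' + M.stepD (pm x2) σ p'
        + M.stepD (pm x3) σ p'))
        = fun p => (1/3 : ℝ) * (pm (runStep x1 σ) p + pm (runStep x2 σ) p + pm (runStep x3 σ) p) := by
      funext p; rw [hstep x1, hstep x2, hstep x3]
    rw [this]
    exact (by simpa using ih (fun τ hτ => hl τ (by simp [hτ])) (runStep x1 σ) (runStep x2 σ) (runStep x3 σ))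

lemma finalD_eq (w : List ΓN) :
    M.finalD w = fun p => (1/3 : ℝ) *
      (pm (run (some (.ab, .ph1 true), 0) (w.map TSym.letter ++ [TSym.dollar])) p
      + pm (run (some (.bc, .ph1 true), 0) (w.map TSym.letter ++ [TSym.dollar])) p
      + pm (run (some (.ca, .ph1 true), 0) (w.map TSym.letter ++ [TSym.dollar])) p) := by
  show List.foldl M.stepD M.initD (TSym.cent :: (w.map TSym.letter ++ [TSym.dollar])) = _
  rw [List.foldl_cons, step_init]
  apply foldl_mix
  intro σ hσ
  rcases List.mem_append.mp hσ with h | h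
  · rcases List.mem_map.mp h with ⟨x, _, rfl⟩; rfl
  · rcases List.mem_singleton.mp h with rfl; rfl

/-! ### Analysis of deterministic runs -/

def diff (p : Pr) (u : List ΓN) : ℤ := (u.map (val p)).sum

@[simp] lemma diff_nil (p : Pr) : diff p [] = 0 := rfl
@[simp] lemma diff_cons (p : Pr) (x : ΓN) (t : List ΓN) :
    diff p (x :: t) = val p x + diff p t := rfl

lemma diff_bound (p : Pr) (u : List ΓN) : |diff p u| ≤ (u.length : ℤ) := by
  induction u with
  | nil => simp
  | cons x t ih =>
    have h1 := val_bound p x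
    have h2 : |val p x + diff p t| ≤ |val p x| + |diff p t| := abs_add_le _ _
    simp only [diff_cons, List.length_cons]
    push_cast
    omega

def Inv (s : Bool) (n : ℤ) : Prop := (0 < n → s = true) ∧ (n < 0 → s = false)

lemma inv_sign (c : ℤ) : Inv (decide (0 < c)) c :=
  ⟨fun h => by simp [h], fun h => by simp; omega⟩

lemma inv_step {s : Bool} {n c : ℤ} (h : Inv s n) (hn : n ≠ 0) (hc : |c| ≤ 1) :
    Inv s (n + c) := by
  rw [abs_le] at hc
  rcases h with ⟨h1, h2⟩
  by_cases hpos : 0 < n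
  · exact ⟨fun _ => h1 hpos, fun hlt => absurd hlt (by omega)⟩
  · have hneg : n < 0 := by omega
    exact ⟨fun hgt => absurd hgt (by omega), fun _ => h2 hneg⟩

/-- Tracking through `ph1` over non-`d` letters. -/
lemma run_ph1 (p : Pr) (u : List ΓN) : ∀ (s : Bool) (n : ℤ), (∀ x ∈ u, x ≠ ΓN.d) → Inv s n →
    ∃ s', run (some (p, .ph1 s), n) (u.map TSym.letter) = (some (p, .ph1 s'), n + diff p u)
      ∧ Inv s' (n + diff p u) := by
  induction u with
  | nil => intro s n _ hI; exact ⟨s, by simp, by simpa using hI⟩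
  | cons x t ih =>
    intro s n hd hI
    have hx : x ≠ ΓN.d := hd x (by simp)
    have hstep : runStep (some (p, .ph1 s), n) (TSym.letter x)
        = (some (p, .ph1 (if decide (n = 0) then decide (0 < val p x) else s)), n + val p x) := by
      unfold runStep
      simp only [detStep, if_neg hx]
    have hInv' : Inv (if decide (n = 0) then decide (0 < val p x) else s) (n + val p x) := by
      by_cases hn : n = 0
      · subst hn
        rw [if_pos (by simp)]
        simpa using inv_sign (val p x)
      · rw [if_neg (by simpa using hn)]
        exact inv_step hI hn (val_bound p x)
    obtain ⟨s', hrun, hI'⟩ := ih _ _ (fun y hy => hd y (by simp [hy])) hInv'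
    refine ⟨s', ?_, ?_⟩
    · rw [List.map_cons, run_cons, hstep, hrun, Prod.mk.injEq]
      exact ⟨rfl, by rw [diff_cons]; ring⟩
    · have heq : n + val p x + diff p t = n + diff p (x :: t) := by rw [diff_cons]; ring
      rw [← heq]; exact hI'

/-- Tracking through `ph3` over non-`d` letters. -/
lemma run_ph3 (p : Pr) (e1 : Bool) (u : List ΓN) :
    ∀ (s : Bool) (n : ℤ), (∀ x ∈ u, x ≠ ΓN.d) → Inv s n →
    ∃ s', run (some (p, .ph3 e1 s), n) (u.map TSym.letter) = (some (p, .ph3 e1 s'), n + diff p u)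
      ∧ Inv s' (n + diff p u) := by
  induction u with
  | nil => intro s n _ hI; exact ⟨s, by simp, by simpa using hI⟩
  | cons x t ih =>
    intro s n hd hI
    have hx : x ≠ ΓN.d := hd x (by simp)
    have hstep : runStep (some (p, .ph3 e1 s), n) (TSym.letter x)
        = (some (p, .ph3 e1 (if decide (n = 0) then decide (0 < val p x) else s)), n + val p x) := by
      unfold runStep
      simp only [detStep, if_neg hx]
    have hInv' : Inv (if decide (n = 0) then decide (0 < val p x) else s) (n + val p x) := by
      by_cases hn : n = 0
      · subst hn
        rw [if_pos (by simp)]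
        simpa using inv_sign (val p x)
      · rw [if_neg (by simpa using hn)]
        exact inv_step hI hn (val_bound p x)
    obtain ⟨s', hrun, hI'⟩ := ih _ _ (fun y hy => hd y (by simp [hy])) hInv'
    refine ⟨s', ?_, ?_⟩
    · rw [List.map_cons, run_cons, hstep, hrun, Prod.mk.injEq]
      exact ⟨rfl, by rw [diff_cons]; ring⟩
    · have heq : n + val p x + diff p t = n + diff p (x :: t) := by rw [diff_cons]; ring
      rw [← heq]; exact hI'

/-- Draining the counter in `ph2` over `d`s. -/
lemma run_drain (p : Pr) (e1 : Bool) : ∀ (k : ℕ) (s : Bool) (n : ℤ), Inv s n → |n| ≤ (k : ℤ) →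
    run (some (p, .ph2 e1 s), n) (List.replicate k (TSym.letter ΓN.d))
      = (some (p, .ph2 e1 s), 0) := by
  intro k
  induction k with
  | zero =>
    intro s n _ habs
    have : n = 0 := by simpa using (by simpa using habs : |n| ≤ 0) |> abs_nonpos_iff.mp
    subst this; simp
  | succ k ih =>
    intro s n hI habs
    rw [List.replicate_succ, run_cons]
    have hstep : runStep (some (p, .ph2 e1 s), n) (TSym.letter ΓN.d)
        = (some (p, .ph2 e1 s), n + (if decide (n = 0) then 0 else if s then -1 else 1)) := by
      unfold runStep
      simp [detStep]
    rw [hstep]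
    by_cases hn : n = 0
    · subst hn
      rw [if_pos (by simp), add_zero]
      exact ih s 0 hI (by simp)
    · rw [if_neg (by simpa using hn)]
      by_cases hs : s = true
      · have hpos : 0 < n := by
          rcases lt_trichotomy n 0 with h | h | h
          · rw [hI.2 h] at hs; exact absurd hs (by simp)
          · exact absurd h hn
          · exact h
        rw [hs]
        simp only [if_pos rfl]
        apply ih
        · exact ⟨fun _ => rfl, fun h => by omega⟩
        · rw [abs_le] at habs ⊢
          push_cast at habs ⊢
          omega
      · have hs' : s = false := by simpa using hs
        have hneg : n < 0 := by
          rcases lt_trichotomy n 0 with h | h | h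
          · exact h
          · exact absurd h hn
          · rw [hI.1 h] at hs; exact absurd rfl hs
        rw [hs']
        rw [if_neg (by decide)]
        apply ih
        · exact ⟨fun h => by omega, fun _ => rfl⟩
        · rw [abs_le] at habs ⊢
          push_cast at habs ⊢
          omega

/-- `ph4` ignores letters. -/
lemma run_ph4 (p : Pr) (e1 e2 : Bool) (l : List ΓN) (n : ℤ) :
    run (some (p, .ph4 e1 e2), n) (l.map TSym.letter) = (some (p, .ph4 e1 e2), n) := by
  induction l with
  | nil => simp
  | cons x t ih =>
    rw [List.map_cons, run_cons]
    have hstep : runStep (some (p, .ph4 e1 e2), n) (TSym.letter x)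
        = (some (p, .ph4 e1 e2), n) := by
      unfold runStep
      have hds : detStep (some (p, .ph4 e1 e2)) (TSym.letter x) (decide (n = 0))
          = (some (p, .ph4 e1 e2), 0) := by cases x <;> rfl
      rw [hds]
      simp
    rw [hstep, ih]

/-- The full run of branch `p` on a promise-shaped word. -/
lemma run_full (p : Pr) (u1 y1 u2 y2 : List ΓN)
    (hu1d : ∀ x ∈ u1, x ≠ ΓN.d) (hu2d : ∀ x ∈ u2, x ≠ ΓN.d)
    (hy1 : ∀ x ∈ y1, x = ΓN.d) (hy2 : ∀ x ∈ y2, x = ΓN.d)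
    (hl1 : u1.length ≤ y1.length) (hl2 : u2.length ≤ y2.length)
    (hne1 : u1 ≠ []) (hne2 : u2 ≠ []) :
    run (some (p, .ph1 true), 0) ((u1 ++ y1 ++ u2 ++ y2).map TSym.letter ++ [TSym.dollar])
      = (some (p, .fin (decideLV (decide (diff p u1 = 0)) (decide (diff p u2 = 0)))),
          diff p u2) := by
  have hlen1 : 1 ≤ u1.length := List.length_pos_iff.mpr hne1
  have hlen2 : 1 ≤ u2.length := List.length_pos_iff.mpr hne2
  obtain ⟨k1, hk1⟩ : ∃ k1, y1.length = k1 + 1 := ⟨y1.length - 1, by omega⟩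
  obtain ⟨k2, hk2⟩ : ∃ k2, y2.length = k2 + 1 := ⟨y2.length - 1, by omega⟩
  have hy1r : y1.map TSym.letter = TSym.letter ΓN.d :: List.replicate k1 (TSym.letter ΓN.d) := by
    rw [List.eq_replicate_length.mpr hy1, hk1, List.map_replicate, List.replicate_succ]
  have hy2r : y2.map TSym.letter = TSym.letter ΓN.d :: List.replicate k2 (TSym.letter ΓN.d) := by
    rw [List.eq_replicate_length.mpr hy2, hk2, List.map_replicate, List.replicate_succ]
  obtain ⟨x, t, rfl⟩ := List.exists_cons_of_ne_nil hne2
  have hx : x ≠ ΓN.d := hu2d x (by simp)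
  set D1 := diff p u1 with hD1
  set D2 := diff p (x :: t) with hD2
  -- phase 1 over u1
  obtain ⟨s1, hrun1, hI1⟩ :=
    run_ph1 p u1 true 0 hu1d ⟨fun _ => rfl, fun h => absurd h (by omega)⟩
  rw [zero_add] at hrun1 hI1
  rw [← hD1] at hrun1 hI1
  -- first d of y1
  have hstep2 : runStep (some (p, .ph1 s1), D1) (TSym.letter ΓN.d)
      = (some (p, .ph2 (decide (D1 = 0)) s1),
          D1 + if decide (D1 = 0) then 0 else if s1 then -1 else 1) := by
    unfold runStep; simp [detStep]
  set n1 : ℤ := D1 + (if decide (D1 = 0) then 0 else if s1 then -1 else 1) with hn1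
  have hbound1 : |D1| ≤ (u1.length : ℤ) := diff_bound p u1
  rw [abs_le] at hbound1
  have hly : (u1.length : ℤ) ≤ (k1 : ℤ) + 1 := by exact_mod_cast hk1 ▸ hl1
  have hI1' : Inv s1 n1 ∧ |n1| ≤ (k1 : ℤ) := by
    by_cases hD : D1 = 0
    · have hn1e : n1 = 0 := by rw [hn1, hD]; simp
      rw [hn1e]
      exact ⟨⟨fun h => absurd h (by omega), fun h => absurd h (by omega)⟩, by simp⟩
    · have hne : n1 = D1 + (if s1 then -1 else 1) := by
        rw [hn1, if_neg (by simpa using hD)]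
      by_cases hs : s1 = true
      · have hpos : 0 < D1 := by
          rcases lt_trichotomy D1 0 with h | h | h
          · rw [hI1.2 h] at hs; simp at hs
          · exact absurd h hD
          · exact h
        have hval : n1 = D1 - 1 := by rw [hne, hs]; simp; ring
        constructor
        · rw [hval]; exact ⟨fun _ => hs, fun h => absurd h (by omega)⟩
        · rw [hval, abs_le]; omega
      · have hs' : s1 = false := by simpa using hs
        have hneg : D1 < 0 := by
          rcases lt_trichotomy D1 0 with h | h | h
          · exact h
          · exact absurd h hD
          · rw [hI1.1 h] at hs; simp at hs
        have hval : n1 = D1 + 1 := by rw [hne, hs']; simp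
        constructor
        · rw [hval]; exact ⟨fun h => absurd h (by omega), fun _ => hs'⟩
        · rw [hval, abs_le]; omega
  obtain ⟨hI1n, hb1n⟩ := hI1'
  have hdrain := run_drain p (decide (D1 = 0)) k1 s1 n1 hI1n hb1n
  -- entering u2
  have hstep4 : runStep (some (p, .ph2 (decide (D1 = 0)) s1), 0) (TSym.letter x)
      = (some (p, .ph3 (decide (D1 = 0)) (decide (0 < val p x))), val p x) := by
    unfold runStep; simp [detStep, hx]
  obtain ⟨s2, hrun5, hI5⟩ := run_ph3 p (decide (D1 = 0)) t (decide (0 < val p x)) (val p x)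
      (fun y hy => hu2d y (by simp [hy])) (inv_sign (val p x))
  have hd2 : val p x + diff p t = D2 := by rw [hD2, diff_cons]
  rw [hd2] at hrun5
  -- first d of y2
  have hstep6 : runStep (some (p, .ph3 (decide (D1 = 0)) s2), D2) (TSym.letter ΓN.d)
      = (some (p, .ph4 (decide (D1 = 0)) (decide (D2 = 0))), D2) := by
    unfold runStep; simp [detStep]
  have hrun7 : run (some (p, .ph4 (decide (D1 = 0)) (decide (D2 = 0))), D2)
      (List.replicate k2 (TSym.letter ΓN.d))
      = (some (p, .ph4 (decide (D1 = 0)) (decide (D2 = 0))), D2) := by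
    simpa [List.map_replicate] using
      run_ph4 p (decide (D1 = 0)) (decide (D2 = 0)) (List.replicate k2 ΓN.d) D2
  have hstep8 : runStep (some (p, .ph4 (decide (D1 = 0)) (decide (D2 = 0))), D2) TSym.dollar
      = (some (p, .fin (decideLV (decide (D1 = 0)) (decide (D2 = 0)))), D2) := by
    unfold runStep; simp [detStep]
  -- assemble
  have hsplit : ((u1 ++ y1 ++ (x :: t) ++ y2).map TSym.letter ++ [TSym.dollar])
      = u1.map TSym.letter ++ (y1.map TSym.letter ++ ((x :: t).map TSym.letter
          ++ (y2.map TSym.letter ++ [TSym.dollar]))) := by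
    simp [List.map_append, List.append_assoc]
  rw [hsplit, run_append, hrun1, run_append, hy1r, run_cons, hstep2, hdrain,
      run_append, List.map_cons, run_cons, hstep4, hrun5, run_append, hy2r]
  rw [show run (some (p, St.ph3 (decide (D1 = 0)) s2), D2)
        (TSym.letter ΓN.d :: List.replicate k2 (TSym.letter ΓN.d))
      = run (runStep (some (p, St.ph3 (decide (D1 = 0)) s2), D2) (TSym.letter ΓN.d))
        (List.replicate k2 (TSym.letter ΓN.d)) from rfl, hstep6, hrun7]
  rw [show run (some (p, St.ph4 (decide (D1 = 0)) (decide (D2 = 0))), D2) [TSym.dollar]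
      = runStep (some (p, St.ph4 (decide (D1 = 0)) (decide (D2 = 0))), D2) TSym.dollar
      from rfl, hstep8]

/-! ### Counters vs. letter counts -/

lemma diff_ab (u : List ΓN) : diff .ab u = (u.count ΓN.a : ℤ) - (u.count ΓN.b : ℤ) := by
  induction u with
  | nil => simp
  | cons x t ih => cases x <;> simp [List.count_cons, val, ih] <;> push_cast <;> ring

lemma diff_bc (u : List ΓN) : diff .bc u = (u.count ΓN.b : ℤ) - (u.count ΓN.c : ℤ) := by
  induction u with
  | nil => simp
  | cons x t ih => cases x <;> simp [List.count_cons, val, ih] <;> push_cast <;> ring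

lemma diff_ca (u : List ΓN) : diff .ca u = (u.count ΓN.c : ℤ) - (u.count ΓN.a : ℤ) := by
  induction u with
  | nil => simp
  | cons x t ih => cases x <;> simp [List.count_cons, val, ih] <;> push_cast <;> ring

lemma diff_eq_ab (u : List ΓN) : diff .ab u = 0 ↔ eqAB u := by
  rw [diff_ab]; unfold eqAB; omega

lemma diff_eq_bc (u : List ΓN) : diff .bc u = 0 ↔ eqBC u := by
  rw [diff_bc]; unfold eqBC; omega

lemma diff_eq_ca (u : List ΓN) : diff .ca u = 0 ↔ eqCA u := by
  rw [diff_ca]; unfold eqCA; omega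

/-! ### Summation of the final distribution -/

lemma summable_ind (x : Q × ℤ) (a : ℝ) :
    Summable (fun p : Q × ℤ => if p = x then a else 0) := by
  apply summable_of_ne_finset_zero (s := {x})
  intro b hb
  simp only [Finset.mem_singleton] at hb
  simp [hb]

lemma tsum_three (x1 x2 x3 : Q × ℤ) (a1 a2 a3 : ℝ) :
    (∑' p : Q × ℤ, ((if p = x1 then a1 else 0) + (if p = x2 then a2 else 0)
      + (if p = x3 then a3 else 0))) = a1 + a2 + a3 := by
  rw [Summable.tsum_add (Summable.add (summable_ind x1 a1) (summable_ind x2 a2)) (summable_ind x3 a3),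
      Summable.tsum_add (summable_ind x1 a1) (summable_ind x2 a2),
      tsum_ite_eq x1 (fun _ => a1), tsum_ite_eq x2 (fun _ => a2), tsum_ite_eq x3 (fun _ => a3)]

lemma hdist (pa pb : Pr) (va vb : LVDec) (na nb : ℤ) (hne : pa ≠ pb) :
    ((some (pa, St.fin va), na) : Q × ℤ) ≠ (some (pb, St.fin vb), nb) := by
  intro h
  apply hne
  have h1 := congrArg Prod.fst h
  simp only [Option.some.injEq, Prod.mk.injEq] at h1
  exact h1.1

/-- Evaluation of acceptance-type probabilities on promise-shaped words. -/
lemma prob_eval (u1 y1 u2 y2 : List ΓN)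
    (hu1d : ∀ x ∈ u1, x ≠ ΓN.d) (hu2d : ∀ x ∈ u2, x ≠ ΓN.d)
    (hy1 : ∀ x ∈ y1, x = ΓN.d) (hy2 : ∀ x ∈ y2, x = ΓN.d)
    (hl1 : u1.length ≤ y1.length) (hl2 : u2.length ≤ y2.length)
    (hne1 : u1 ≠ []) (hne2 : u2 ≠ []) (D : LVDec) :
    (∑' pp : Q × ℤ, if mlvdec pp.1 = D then M.finalD (u1 ++ y1 ++ u2 ++ y2) pp else 0)
    = (if decideLV (decide (diff .ab u1 = 0)) (decide (diff .ab u2 = 0)) = D then (1:ℝ)/3 else 0)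
    + (if decideLV (decide (diff .bc u1 = 0)) (decide (diff .bc u2 = 0)) = D then (1:ℝ)/3 else 0)
    + (if decideLV (decide (diff .ca u1 = 0)) (decide (diff .ca u2 = 0)) = D then (1:ℝ)/3 else 0) := by
  have hfin := finalD_eq (u1 ++ y1 ++ u2 ++ y2)
  rw [run_full .ab u1 y1 u2 y2 hu1d hu2d hy1 hy2 hl1 hl2 hne1 hne2,
      run_full .bc u1 y1 u2 y2 hu1d hu2d hy1 hy2 hl1 hl2 hne1 hne2,
      run_full .ca u1 y1 u2 y2 hu1d hu2d hy1 hy2 hl1 hl2 hne1 hne2] at hfin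
  set r1 : Q × ℤ := (some (.ab, .fin (decideLV (decide (diff .ab u1 = 0))
      (decide (diff .ab u2 = 0)))), diff .ab u2) with hr1
  set r2 : Q × ℤ := (some (.bc, .fin (decideLV (decide (diff .bc u1 = 0))
      (decide (diff .bc u2 = 0)))), diff .bc u2) with hr2
  set r3 : Q × ℤ := (some (.ca, .fin (decideLV (decide (diff .ca u1 = 0))
      (decide (diff .ca u2 = 0)))), diff .ca u2) with hr3
  have h12 : r1 ≠ r2 := hdist _ _ _ _ _ _ (by decide)
  have h13 : r1 ≠ r3 := hdist _ _ _ _ _ _ (by decide)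
  have h23 : r2 ≠ r3 := hdist _ _ _ _ _ _ (by decide)
  have hint : ∀ pp : Q × ℤ, (if mlvdec pp.1 = D then M.finalD (u1 ++ y1 ++ u2 ++ y2) pp else 0)
      = (if pp = r1 then (if mlvdec r1.1 = D then (1:ℝ)/3 else 0) else 0)
        + (if pp = r2 then (if mlvdec r2.1 = D then (1:ℝ)/3 else 0) else 0)
        + (if pp = r3 then (if mlvdec r3.1 = D then (1:ℝ)/3 else 0) else 0) := by
    have n21 : ¬(r2 = r1) := fun h => h12 h.symm
    have n31 : ¬(r3 = r1) := fun h => h13 h.symm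
    have n32 : ¬(r3 = r2) := fun h => h23 h.symm
    intro pp
    simp only [hfin]
    by_cases hp1 : pp = r1
    · subst hp1
      rw [show pm r1 r1 = 1 from if_pos rfl, show pm r2 r1 = 0 from if_neg h12,
          show pm r3 r1 = 0 from if_neg h13,
          show (if (r1 : Q × ℤ) = r1 then (if mlvdec r1.1 = D then (1:ℝ)/3 else 0) else 0)
            = (if mlvdec r1.1 = D then (1:ℝ)/3 else 0) from if_pos rfl,
          show (if (r1 : Q × ℤ) = r2 then (if mlvdec r2.1 = D then (1:ℝ)/3 else 0) else 0)
            = 0 from if_neg h12,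
          show (if (r1 : Q × ℤ) = r3 then (if mlvdec r3.1 = D then (1:ℝ)/3 else 0) else 0)
            = 0 from if_neg h13]
      split_ifs <;> ring
    · by_cases hp2 : pp = r2
      · subst hp2
        rw [show pm r1 r2 = 0 from if_neg n21, show pm r2 r2 = 1 from if_pos rfl,
            show pm r3 r2 = 0 from if_neg h23,
            show (if (r2 : Q × ℤ) = r1 then (if mlvdec r1.1 = D then (1:ℝ)/3 else 0) else 0)
              = 0 from if_neg n21,
            show (if (r2 : Q × ℤ) = r2 then (if mlvdec r2.1 = D then (1:ℝ)/3 else 0) else 0)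
              = (if mlvdec r2.1 = D then (1:ℝ)/3 else 0) from if_pos rfl,
            show (if (r2 : Q × ℤ) = r3 then (if mlvdec r3.1 = D then (1:ℝ)/3 else 0) else 0)
              = 0 from if_neg h23]
        split_ifs <;> ring
      · by_cases hp3 : pp = r3
        · subst hp3
          rw [show pm r1 r3 = 0 from if_neg n31, show pm r2 r3 = 0 from if_neg n32,
              show pm r3 r3 = 1 from if_pos rfl,
              show (if (r3 : Q × ℤ) = r1 then (if mlvdec r1.1 = D then (1:ℝ)/3 else 0) else 0)
                = 0 from if_neg n31,
              show (if (r3 : Q × ℤ) = r2 then (if mlvdec r2.1 = D then (1:ℝ)/3 else 0) else 0)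
                = 0 from if_neg n32,
              show (if (r3 : Q × ℤ) = r3 then (if mlvdec r3.1 = D then (1:ℝ)/3 else 0) else 0)
                = (if mlvdec r3.1 = D then (1:ℝ)/3 else 0) from if_pos rfl]
          split_ifs <;> ring
        · rw [show pm r1 pp = 0 from if_neg hp1, show pm r2 pp = 0 from if_neg hp2,
              show pm r3 pp = 0 from if_neg hp3, if_neg hp1, if_neg hp2, if_neg hp3]
          split_ifs <;> ring
  rw [tsum_congr hint, tsum_three]
  rfl

/-- Evaluation of the acceptance probability. -/
lemma accProb_eval (u1 y1 u2 y2 : List ΓN)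
    (hu1d : ∀ x ∈ u1, x ≠ ΓN.d) (hu2d : ∀ x ∈ u2, x ≠ ΓN.d)
    (hy1 : ∀ x ∈ y1, x = ΓN.d) (hy2 : ∀ x ∈ y2, x = ΓN.d)
    (hl1 : u1.length ≤ y1.length) (hl2 : u2.length ≤ y2.length)
    (hne1 : u1 ≠ []) (hne2 : u2 ≠ []) :
    M.accProb (u1 ++ y1 ++ u2 ++ y2)
    = (if decideLV (decide (diff .ab u1 = 0)) (decide (diff .ab u2 = 0)) = LVDec.acc then (1:ℝ)/3 else 0)
    + (if decideLV (decide (diff .bc u1 = 0)) (decide (diff .bc u2 = 0)) = LVDec.acc then (1:ℝ)/3 else 0)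
    + (if decideLV (decide (diff .ca u1 = 0)) (decide (diff .ca u2 = 0)) = LVDec.acc then (1:ℝ)/3 else 0) := by
  show (∑' pp : Q × ℤ, if mlvdec pp.1 = LVDec.acc then M.finalD (u1 ++ y1 ++ u2 ++ y2) pp else 0) = _
  exact prob_eval u1 y1 u2 y2 hu1d hu2d hy1 hy2 hl1 hl2 hne1 hne2 LVDec.acc

/-- Evaluation of the rejection probability. -/
lemma rejProb_eval (u1 y1 u2 y2 : List ΓN)
    (hu1d : ∀ x ∈ u1, x ≠ ΓN.d) (hu2d : ∀ x ∈ u2, x ≠ ΓN.d)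
    (hy1 : ∀ x ∈ y1, x = ΓN.d) (hy2 : ∀ x ∈ y2, x = ΓN.d)
    (hl1 : u1.length ≤ y1.length) (hl2 : u2.length ≤ y2.length)
    (hne1 : u1 ≠ []) (hne2 : u2 ≠ []) :
    M.rejProb (u1 ++ y1 ++ u2 ++ y2)
    = (if decideLV (decide (diff .ab u1 = 0)) (decide (diff .ab u2 = 0)) = LVDec.rej then (1:ℝ)/3 else 0)
    + (if decideLV (decide (diff .bc u1 = 0)) (decide (diff .bc u2 = 0)) = LVDec.rej then (1:ℝ)/3 else 0)
    + (if decideLV (decide (diff .ca u1 = 0)) (decide (diff .ca u2 = 0)) = LVDec.rej then (1:ℝ)/3 else 0) := by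
  show (∑' pp : Q × ℤ, if mlvdec pp.1 = LVDec.rej then M.finalD (u1 ++ y1 ++ u2 ++ y2) pp else 0) = _
  exact prob_eval u1 y1 u2 y2 hu1d hu2d hy1 hy2 hl1 hl2 hne1 hne2 LVDec.rej

end Stmt4

/-- a Las Vegas 1P1CA solves `ONE-NONE` with success probability `1/3`. -/
theorem stmt4 : ∃ M : LasVegas1P1CA ΓN,
    (∀ w ∈ ONE * NONE, (1 : ℝ) / 3 ≤ M.accProb w ∧ M.rejProb w = 0) ∧
    (∀ w ∈ NONE * ONE, (1 : ℝ) / 3 ≤ M.rejProb w ∧ M.accProb w = 0) := by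
  classical
  refine ⟨Stmt4.M, ?_, ?_⟩
  · rintro w hw
    rw [Language.mem_mul] at hw
    obtain ⟨w1, hw1, w2, hw2, rfl⟩ := hw
    obtain ⟨u1, y1, rfl, hu1d, hy1, hl1, hone⟩ := hw1
    obtain ⟨u2, y2, rfl, hu2d, hy2, hl2, hnAB, hnBC, hnCA⟩ := hw2
    have hne1 : u1 ≠ [] := by
      rintro rfl
      rcases hone with ⟨_, h, _⟩ | ⟨h, _, _⟩ | ⟨h, _, _⟩ <;> exact h rfl
    have hne2 : u2 ≠ [] := by rintro rfl; exact hnAB rfl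
    have hww : (u1 ++ y1) ++ (u2 ++ y2) = u1 ++ y1 ++ u2 ++ y2 := by
      simp [List.append_assoc]
    have e2ab : (decide (Stmt4.diff .ab u2 = 0)) = false :=
      decide_eq_false (fun h => hnAB ((Stmt4.diff_eq_ab u2).mp h))
    have e2bc : (decide (Stmt4.diff .bc u2 = 0)) = false :=
      decide_eq_false (fun h => hnBC ((Stmt4.diff_eq_bc u2).mp h))
    have e2ca : (decide (Stmt4.diff .ca u2 = 0)) = false :=
      decide_eq_false (fun h => hnCA ((Stmt4.diff_eq_ca u2).mp h))
    rw [hww,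
      Stmt4.accProb_eval u1 y1 u2 y2 hu1d hu2d hy1 hy2 hl1 hl2 hne1 hne2,
      Stmt4.rejProb_eval u1 y1 u2 y2 hu1d hu2d hy1 hy2 hl1 hl2 hne1 hne2, e2ab, e2bc, e2ca]
    rcases hone with ⟨h1, h2, h3⟩ | ⟨h1, h2, h3⟩ | ⟨h1, h2, h3⟩
    · have d1 : (decide (Stmt4.diff .ab u1 = 0)) = true := decide_eq_true ((Stmt4.diff_eq_ab u1).mpr h1)
      have d2 : (decide (Stmt4.diff .bc u1 = 0)) = false := decide_eq_false (fun h => h2 ((Stmt4.diff_eq_bc u1).mp h))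
      have d3 : (decide (Stmt4.diff .ca u1 = 0)) = false := decide_eq_false (fun h => h3 ((Stmt4.diff_eq_ca u1).mp h))
      rw [d1, d2, d3]
      constructor <;> simp [Stmt4.decideLV] <;> norm_num
    · have d1 : (decide (Stmt4.diff .ab u1 = 0)) = false := decide_eq_false (fun h => h1 ((Stmt4.diff_eq_ab u1).mp h))
      have d2 : (decide (Stmt4.diff .bc u1 = 0)) = true := decide_eq_true ((Stmt4.diff_eq_bc u1).mpr h2)
      have d3 : (decide (Stmt4.diff .ca u1 = 0)) = false := decide_eq_false (fun h => h3 ((Stmt4.diff_eq_ca u1).mp h))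
      rw [d1, d2, d3]
      constructor <;> simp [Stmt4.decideLV] <;> norm_num
    · have d1 : (decide (Stmt4.diff .ab u1 = 0)) = false := decide_eq_false (fun h => h1 ((Stmt4.diff_eq_ab u1).mp h))
      have d2 : (decide (Stmt4.diff .bc u1 = 0)) = false := decide_eq_false (fun h => h2 ((Stmt4.diff_eq_bc u1).mp h))
      have d3 : (decide (Stmt4.diff .ca u1 = 0)) = true := decide_eq_true ((Stmt4.diff_eq_ca u1).mpr h3)
      rw [d1, d2, d3]
      constructor <;> simp [Stmt4.decideLV] <;> norm_num
  · rintro w hw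
    rw [Language.mem_mul] at hw
    obtain ⟨w1, hw1, w2, hw2, rfl⟩ := hw
    obtain ⟨u1, y1, rfl, hu1d, hy1, hl1, hnAB, hnBC, hnCA⟩ := hw1
    obtain ⟨u2, y2, rfl, hu2d, hy2, hl2, hone⟩ := hw2
    have hne2 : u2 ≠ [] := by
      rintro rfl
      rcases hone with ⟨_, h, _⟩ | ⟨h, _, _⟩ | ⟨h, _, _⟩ <;> exact h rfl
    have hne1 : u1 ≠ [] := by rintro rfl; exact hnAB rfl
    have hww : (u1 ++ y1) ++ (u2 ++ y2) = u1 ++ y1 ++ u2 ++ y2 := by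
      simp [List.append_assoc]
    have e1ab : (decide (Stmt4.diff .ab u1 = 0)) = false :=
      decide_eq_false (fun h => hnAB ((Stmt4.diff_eq_ab u1).mp h))
    have e1bc : (decide (Stmt4.diff .bc u1 = 0)) = false :=
      decide_eq_false (fun h => hnBC ((Stmt4.diff_eq_bc u1).mp h))
    have e1ca : (decide (Stmt4.diff .ca u1 = 0)) = false :=
      decide_eq_false (fun h => hnCA ((Stmt4.diff_eq_ca u1).mp h))
    rw [hww,
      Stmt4.accProb_eval u1 y1 u2 y2 hu1d hu2d hy1 hy2 hl1 hl2 hne1 hne2,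
      Stmt4.rejProb_eval u1 y1 u2 y2 hu1d hu2d hy1 hy2 hl1 hl2 hne1 hne2, e1ab, e1bc, e1ca]
    rcases hone with ⟨h1, h2, h3⟩ | ⟨h1, h2, h3⟩ | ⟨h1, h2, h3⟩
    · have d1 : (decide (Stmt4.diff .ab u2 = 0)) = true := decide_eq_true ((Stmt4.diff_eq_ab u2).mpr h1)
      have d2 : (decide (Stmt4.diff .bc u2 = 0)) = false := decide_eq_false (fun h => h2 ((Stmt4.diff_eq_bc u2).mp h))
      have d3 : (decide (Stmt4.diff .ca u2 = 0)) = false := decide_eq_false (fun h => h3 ((Stmt4.diff_eq_ca u2).mp h))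
      rw [d1, d2, d3]
      constructor <;> simp [Stmt4.decideLV] <;> norm_num
    · have d1 : (decide (Stmt4.diff .ab u2 = 0)) = false := decide_eq_false (fun h => h1 ((Stmt4.diff_eq_ab u2).mp h))
      have d2 : (decide (Stmt4.diff .bc u2 = 0)) = true := decide_eq_true ((Stmt4.diff_eq_bc u2).mpr h2)
      have d3 : (decide (Stmt4.diff .ca u2 = 0)) = false := decide_eq_false (fun h => h3 ((Stmt4.diff_eq_ca u2).mp h))
      rw [d1, d2, d3]
      constructor <;> simp [Stmt4.decideLV] <;> norm_num
    · have d1 : (decide (Stmt4.diff .ab u2 = 0)) = false := decide_eq_false (fun h => h1 ((Stmt4.diff_eq_ab u2).mp h))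
      have d2 : (decide (Stmt4.diff .bc u2 = 0)) = false := decide_eq_false (fun h => h2 ((Stmt4.diff_eq_bc u2).mp h))
      have d3 : (decide (Stmt4.diff .ca u2 = 0)) = true := decide_eq_true ((Stmt4.diff_eq_ca u2).mpr h3)
      rw [d1, d2, d3]
      constructor <;> simp [Stmt4.decideLV] <;> norm_num
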